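/- Under the hypotheses of the chain lemma, if the word a of a chain C = (q₀; a) contains a contiguous substring a₀ b₀ a₀ where the word a₀ contains every letter of the alphabet 𝒱, then w(a₀ b₀) = 0, i.e. a₀ b₀ is a loop. -/

import Mathlib

theorem stmt10 (D n : ℕ) (𝒱 : Finset ((Fin D → ℤ) × (Fin D → ℤ)))
    (v : ℕ → (Fin D → ℤ) × (Fin D → ℤ)) (q : ℕ → Fin D → ℤ)
    (hmem : ∀ k < n, v k ∈ 𝒱)
    (hrec : ∀ k < n, q (k + 1) = q k + ((v k).1 - (v k).2))
    (horth : ∀ k < n,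
      ∑ i, (q (k + 1) i - (v k).2 i) * ((v k).1 i - (v k).2 i) = 0)
    (hspan : ∀ z : Fin D → ℤ,
      z ∈ Submodule.span ℤ ((fun x : (Fin D → ℤ) × (Fin D → ℤ) => x.1 - x.2) ''
        (𝒱 : Set ((Fin D → ℤ) × (Fin D → ℤ)))) →
      (∀ x ∈ 𝒱, ∑ idx, z idx * (x.1 idx - x.2 idx) = 0) → z = 0)
    (p la lb : ℕ) (hla : 0 < la) (hlen : p + la + lb + la ≤ n)
    (hrep : ∀ t < la, v (p + t) = v (p + la + lb + t))
    (hall : ∀ x ∈ 𝒱, ∃ t < la, v (p + t) = x) :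
    (∑ l ∈ Finset.Ico p (p + la + lb), ((v l).1 - (v l).2)) = 0 := by
  set w : ℕ → Fin D → ℤ := fun l => (v l).1 - (v l).2 with hwdef
  set z : Fin D → ℤ := ∑ l ∈ Finset.Ico p (p + la + lb), w l with hzdef
  -- telescoping
  have htel : ∀ j k, j ≤ k → k ≤ n → q k = q j + ∑ l ∈ Finset.Ico j k, w l := by
    intro j k hjk hkn
    induction k with
    | zero =>
      have : j = 0 := Nat.le_zero.mp hjk
      simp [this]
    | succ k ih =>
      rcases Nat.lt_or_ge j (k + 1) with h | h
      · have hjk' : j ≤ k := Nat.lt_succ_iff.mp h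
        rw [hrec k (by omega), ih hjk' (by omega),
          Finset.sum_Ico_succ_top hjk', add_assoc]
      · have : j = k + 1 := by omega
        simp [this]
  have hkey : ∀ x ∈ 𝒱, ∑ i, z i * (x.1 i - x.2 i) = 0 := by
    intro x hx
    obtain ⟨t, ht, hvt⟩ := hall x hx
    have hv2 : v (p + la + lb + t) = x := by rw [← hrep t ht, hvt]
    have h1 := horth (p + t) (by omega)
    have h2 := horth (p + la + lb + t) (by omega)
    rw [hvt] at h1
    rw [hv2] at h2
    have hq : q (p + la + lb + t + 1)
        = q (p + t + 1) + ∑ l ∈ Finset.Ico (p + t + 1) (p + la + lb + t + 1), w l :=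
      htel _ _ (by omega) (by omega)
    -- cyclic shift: the Ico sum equals z
    have hsum : ∑ l ∈ Finset.Ico (p + t + 1) (p + la + lb + t + 1), w l = z := by
      rw [← Finset.sum_Ico_consecutive w
        (show p + t + 1 ≤ p + la + lb by omega)
        (show p + la + lb ≤ p + la + lb + t + 1 by omega)]
      have hA : ∑ l ∈ Finset.Ico (p + la + lb) (p + la + lb + t + 1), w l
          = ∑ l ∈ Finset.Ico p (p + t + 1), w l := by
        rw [Finset.sum_Ico_eq_sum_range, Finset.sum_Ico_eq_sum_range]
        have e1 : p + la + lb + t + 1 - (p + la + lb) = t + 1 := by omega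
        have e2 : p + t + 1 - p = t + 1 := by omega
        rw [e1, e2]
        apply Finset.sum_congr rfl
        intro l hl
        simp only [Finset.mem_range] at hl
        simp only [hwdef]
        rw [← hrep l (by omega)]
      rw [hA, hzdef,
        ← Finset.sum_Ico_consecutive w
          (show p ≤ p + t + 1 by omega)
          (show p + t + 1 ≤ p + la + lb by omega), add_comm]
    rw [hsum] at hq
    have : ∑ i, z i * (x.1 i - x.2 i)
        = (∑ i, (q (p + la + lb + t + 1) i - x.2 i) * (x.1 i - x.2 i))
          - ∑ i, (q (p + t + 1) i - x.2 i) * (x.1 i - x.2 i) := by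
      rw [← Finset.sum_sub_distrib]
      apply Finset.sum_congr rfl
      intro i _
      have hqi : q (p + la + lb + t + 1) i = q (p + t + 1) i + z i := by
        rw [hq]; simp
      rw [hqi]; ring
    rw [this, h1, h2, sub_zero]
  have hmemz : z ∈ Submodule.span ℤ
      ((fun x : (Fin D → ℤ) × (Fin D → ℤ) => x.1 - x.2) ''
        (𝒱 : Set ((Fin D → ℤ) × (Fin D → ℤ)))) := by
    rw [hzdef]
    apply Submodule.sum_mem
    intro l hl
    apply Submodule.subset_span
    simp only [Finset.mem_Ico] at hl
    exact ⟨v l, hmem l (by omega), rfl⟩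
  exact hspan z hmemz hkey
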